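/- Let G be a finite metacyclic group that is the direct product of two isomorphic nonabelian subgroups G₁ and G₂. Then a contradiction follows; i.e., no finite metacyclic group is the direct product of two isomorphic nonabelian groups. -/

import Mathlib

/-- The quotient by a normal subgroup is cyclic. -/
def QuotientIsCyclic {G : Type*} [Group G] (N : Subgroup G) (hN : N.Normal) : Prop :=
  letI := hN; IsCyclic (G ⧸ N)

/-- A group is metacyclic if it has a cyclic normal subgroup with cyclic quotient. -/
def IsMetacyclic (G : Type*) [Group G] : Prop :=
  ∃ (N : Subgroup G) (hN : N.Normal), IsCyclic N ∧ QuotientIsCyclic N hN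

/-- In a finite cyclic group, any element killed by `orderOf x` lies in `zpowers x`. -/
lemma aux_mem_zpowers {α : Type*} [Group α] [Finite α] [IsCyclic α]
    (x y : α) (h : y ^ orderOf x = 1) : y ∈ Subgroup.zpowers x := by
  classical
  cases nonempty_fintype α
  set n := orderOf x with hn
  have hn0 : 0 < n := (orderOf_pos x)
  set S : Finset α := Finset.univ.filter (fun a => a ^ n = 1) with hS
  have hsub : (Subgroup.zpowers x : Set α).toFinset ⊆ S := by
    intro a ha
    rw [Set.mem_toFinset] at ha
    have hdvd : orderOf a ∣ n := orderOf_dvd_of_mem_zpowers ha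
    rw [hS, Finset.mem_filter]
    exact ⟨Finset.mem_univ a, orderOf_dvd_iff_pow_eq_one.mp hdvd⟩
  have hcardS : S.card ≤ n := by
    have := IsCyclic.card_pow_eq_one_le (α := α) hn0
    convert this using 2
  have hcardT : ((Subgroup.zpowers x : Set α).toFinset).card = n := by
    rw [Set.toFinset_card, ← Nat.card_eq_fintype_card]
    simpa using Nat.card_zpowers x
  have heq : (Subgroup.zpowers x : Set α).toFinset = S :=
    Finset.eq_of_subset_of_card_le hsub (hcardT ▸ hcardS)
  have hy : y ∈ S := by
    rw [hS, Finset.mem_filter]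
    exact ⟨Finset.mem_univ y, h⟩
  rw [← heq, Set.mem_toFinset] at hy
  exact hy

open scoped commutatorElement

set_option maxHeartbeats 1600000 in
theorem no_metacyclic_product_of_isomorphic_nonabelian
    {G₁ G₂ : Type*} [Group G₁] [Group G₂] [Finite G₁] [Finite G₂]
    (hmeta : IsMetacyclic (G₁ × G₂)) (hiso : Nonempty (G₁ ≃* G₂))
    (hnonab₁ : ∃ x y : G₁, x * y ≠ y * x) (hnonab₂ : ∃ x y : G₂, x * y ≠ y * x) :
    False := by
  obtain ⟨N, hN, hNcyc, hQcyc⟩ := hmeta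
  letI := hN
  haveI : IsCyclic ((G₁ × G₂) ⧸ N) := hQcyc
  haveI : IsCyclic N := hNcyc
  -- every commutator lies in N
  have key : ∀ a b : G₁ × G₂, ⁅a, b⁆ ∈ N := by
    intro a b
    have hcomm : ∀ u v : (G₁ × G₂) ⧸ N, u * v = v * u :=
      fun u v => (IsCyclic.commGroup (α := (G₁ × G₂) ⧸ N)).mul_comm u v
    have : ((⁅a, b⁆ : G₁ × G₂) : (G₁ × G₂) ⧸ N) = 1 := by
      rw [show ((⁅a, b⁆ : G₁ × G₂) : (G₁ × G₂) ⧸ N)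
          = ⁅(a : (G₁ × G₂) ⧸ N), (b : (G₁ × G₂) ⧸ N)⁆ from
        map_commutatorElement (QuotientGroup.mk' N) a b]
      exact commutatorElement_eq_one_iff_mul_comm.mpr (hcomm _ _)
    exact (QuotientGroup.eq_one_iff _).mp this
  obtain ⟨a, b, hab⟩ := hnonab₁
  obtain ⟨φ⟩ := hiso
  set u : G₁ := ⁅a, b⁆ with hu
  set w : G₂ := ⁅φ a, φ b⁆ with hw
  have hu1 : u ≠ 1 := fun h => hab (commutatorElement_eq_one_iff_mul_comm.mp h)
  have hwu : w = φ u := (map_commutatorElement φ.toMonoidHom a b).symm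
  have horder_w : orderOf w = orderOf u := by
    rw [hwu]; exact orderOf_injective φ.toMonoidHom φ.injective u
  set c₁ : G₁ × G₂ := (u, 1) with hc₁
  set c₂ : G₁ × G₂ := (1, w) with hc₂
  have hc₁N : c₁ ∈ N := by
    have : c₁ = ⁅((a, 1) : G₁ × G₂), ((b, 1) : G₁ × G₂)⁆ := by
      simp [hc₁, commutatorElement_def, Prod.ext_iff, hu]
    rw [this]; exact key _ _
  have hc₂N : c₂ ∈ N := by
    have : c₂ = ⁅((1, φ a) : G₁ × G₂), ((1, φ b) : G₁ × G₂)⁆ := by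
      simp [hc₂, commutatorElement_def, Prod.ext_iff, hw]
    rw [this]; exact key _ _
  have ho₁ : orderOf c₁ = orderOf u := by
    have : orderOf c₁ = Nat.lcm (orderOf u) (orderOf (1 : G₂)) := Prod.orderOf c₁
    simpa using this
  have ho₂ : orderOf c₂ = orderOf u := by
    have : orderOf c₂ = Nat.lcm (orderOf (1 : G₁)) (orderOf w) := Prod.orderOf c₂
    simpa [horder_w] using this
  set m : ℕ := orderOf u with hm
  have hm1 : m ≠ 1 := by
    intro h
    exact hu1 (orderOf_eq_one_iff.mp h)
  obtain ⟨p, hp, hpd⟩ := Nat.exists_prime_and_dvd hm1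
  have hm0 : m ≠ 0 := (orderOf_pos u).ne'
  have hmp_dvd : m / p ∣ m := Nat.div_dvd_of_dvd hpd
  have hgcd : Nat.gcd m (m / p) = m / p := Nat.gcd_eq_right hmp_dvd
  have hdiv : m / (m / p) = p := Nat.div_div_self hpd hm0
  have hordu : orderOf (u ^ (m / p)) = p := by
    have h1 : orderOf (u ^ (m / p)) = orderOf u / Nat.gcd (orderOf u) (m / p) :=
      orderOf_pow u
    rw [h1, ← hm, hgcd, hdiv]
  have hordw : orderOf (w ^ (m / p)) = p := by
    have h1 : orderOf (w ^ (m / p)) = orderOf w / Nat.gcd (orderOf w) (m / p) :=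
      orderOf_pow w
    rw [h1, horder_w, hgcd, hdiv]
  set d₁ : G₁ × G₂ := (u ^ (m / p), 1) with hd₁
  set d₂ : G₁ × G₂ := (1, w ^ (m / p)) with hd₂
  have hd₁c : d₁ = c₁ ^ (m / p) := by
    have : c₁ ^ (m / p) = (u ^ (m / p), (1 : G₂) ^ (m / p)) := rfl
    rw [this, one_pow]
  have hd₂c : d₂ = c₂ ^ (m / p) := by
    have : c₂ ^ (m / p) = ((1 : G₁) ^ (m / p), w ^ (m / p)) := rfl
    rw [this, one_pow]
  have hod₁ : orderOf d₁ = p := by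
    have h1 : orderOf d₁ = Nat.lcm (orderOf (u ^ (m / p))) (orderOf (1 : G₂)) :=
      Prod.orderOf d₁
    simpa [hordu] using h1
  have hod₂ : orderOf d₂ = p := by
    have h1 : orderOf d₂ = Nat.lcm (orderOf (1 : G₁)) (orderOf (w ^ (m / p))) :=
      Prod.orderOf d₂
    simpa [hordw] using h1
  have hd₁N : d₁ ∈ N := hd₁c ▸ pow_mem hc₁N _
  have hd₂N : d₂ ∈ N := hd₂c ▸ pow_mem hc₂N _
  set D₁ : N := ⟨d₁, hd₁N⟩ with hD₁
  set D₂ : N := ⟨d₂, hd₂N⟩ with hD₂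
  have hoD₁ : orderOf D₁ = p := by
    rw [← hod₁]; exact (orderOf_injective N.subtype N.subtype_injective D₁).symm
  have hoD₂ : orderOf D₂ = p := by
    rw [← hod₂]; exact (orderOf_injective N.subtype N.subtype_injective D₂).symm
  have hkill : D₂ ^ orderOf D₁ = 1 := by
    rw [hoD₁, ← hoD₂]; exact pow_orderOf_eq_one D₂
  obtain ⟨k, hk⟩ := aux_mem_zpowers D₁ D₂ hkill
  -- compare second components
  have hkG : d₁ ^ k = d₂ := by
    have := congrArg (N.subtype) hk
    simpa using this
  have h2 : (d₂ : G₁ × G₂).2 = 1 := by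
    rw [← hkG]
    have hzz : (d₁ ^ k).2 = d₁.2 ^ k := rfl
    rw [hzz]
    simp [hd₁]
  have hw2 : (d₂ : G₁ × G₂).2 = w ^ (m / p) := rfl
  rw [hw2] at h2
  rw [h2, orderOf_one] at hordw
  exact hp.one_lt.ne hordw
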